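/- If S is an aperiodic automorphism of a standard probability space, then the cohomology class of the trivial extension S × Id is dense in Ext(S): for every skew product R over S and every δ > 0 there exists J ∈ 𝒥 (an automorphism of X × X preserving every set A × X) such that μ⊗μ({z : J^{-1}(S × Id)J z ≠ R z}) < δ. -/

import Mathlib

open MeasureTheory Set

/-- A measure-preserving automorphism of `(X, μ)`. -/
structure Aut (X : Type*) [MeasurableSpace X] (μ : Measure X) where
  toEquiv : X ≃ᵐ X
  mp : MeasurePreserving toEquiv μ μ

namespace Aut

variable {X : Type*} [MeasurableSpace X] {μ : Measure X}

/-- The identity automorphism. -/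
def id (μ : Measure X) : Aut X μ := ⟨MeasurableEquiv.refl X, MeasurePreserving.id μ⟩

/-- Composition of automorphisms: `(a.comp b) x = a (b x)`. -/
def comp (a b : Aut X μ) : Aut X μ :=
  ⟨b.toEquiv.trans a.toEquiv, a.mp.comp b.mp⟩

/-- Inverse automorphism. -/
def inv (a : Aut X μ) : Aut X μ := ⟨a.toEquiv.symm, a.mp.symm a.toEquiv⟩

end Aut

/-- The Halmos (pseudo)metric on `Aut X μ` associated with a fixed family `A`
of measurable sets (dense in the measure algebra):
`ρ(S,T) = Σ_i 2^{-i} (μ(S A_i Δ T A_i) + μ(S⁻¹ A_i Δ T⁻¹ A_i))`. -/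
noncomputable def halmos {X : Type*} [MeasurableSpace X] {μ : Measure X}
    (A : ℕ → Set X) (S T : Aut X μ) : ℝ :=
  ∑' i : ℕ, (1 / 2 : ℝ) ^ i *
    ((μ (symmDiff (S.toEquiv '' A i) (T.toEquiv '' A i))).toReal +
     (μ (symmDiff (S.toEquiv.symm '' A i) (T.toEquiv.symm '' A i))).toReal)

/-- A skew product over `S`: an automorphism `R` of the product space together with
a measurable family of fiber automorphisms `T x` such that `R(x,y) = (Sx, T_x y)`. -/
structure SkewExt {X : Type*} [MeasurableSpace X] {μ : Measure X} (S : Aut X μ) where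
  T : X → Aut X μ
  prod : Aut (X × X) (μ.prod μ)
  spec : ∀ p : X × X, prod.toEquiv p = (S.toEquiv p.1, (T p.1).toEquiv p.2)

/-- `R ∈ Ext(S)`: `R` is a skew product over `S` for some measurable family of fibers. -/
def IsSkewProduct {X : Type*} [MeasurableSpace X] {μ : Measure X}
    (S : Aut X μ) (R : Aut (X × X) (μ.prod μ)) : Prop :=
  ∃ T : X → Aut X μ, ∀ p : X × X, R.toEquiv p = (S.toEquiv p.1, (T p.1).toEquiv p.2)

/-- The `n`-step cocycle `C(x,n,R) = T_{S^{n-1}x} ∘ ⋯ ∘ T_{Sx} ∘ T_x`. -/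
noncomputable def cocycle {X : Type*} [MeasurableSpace X] {μ : Measure X}
    (S : Aut X μ) (T : X → Aut X μ) (x : X) : ℕ → Aut X μ
  | 0 => Aut.id μ
  | n + 1 => (T (S.toEquiv^[n] x)).comp (cocycle S T x n)

/-- Openness of a set with respect to a (pseudo)metric `d`. -/
def IsOpenWrt {Z : Type*} (d : Z → Z → ℝ) (U : Set Z) : Prop :=
  ∀ z ∈ U, ∃ ε > (0 : ℝ), ∀ w, d z w < ε → w ∈ U

/-- `D` is a `G_δ` set with respect to the (pseudo)metric `d`. -/
def IsGdeltaWrt {Z : Type*} (d : Z → Z → ℝ) (D : Set Z) : Prop :=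
  ∃ U : ℕ → Set Z, (∀ k, IsOpenWrt d (U k)) ∧ D = ⋂ k, U k

/-- `D` is dense with respect to the (pseudo)metric `d`. -/
def IsDenseWrt {Z : Type*} (d : Z → Z → ℝ) (D : Set Z) : Prop :=
  ∀ z : Z, ∀ ε > (0 : ℝ), ∃ w ∈ D, d z w < ε

/-- `S` is aperiodic: for every `n ≥ 1` the set of `n`-periodic points is null. -/
def Aperiodic {X : Type*} [MeasurableSpace X] {μ : Measure X} (S : Aut X μ) : Prop :=
  ∀ n : ℕ, 1 ≤ n → μ {x : X | S.toEquiv^[n] x = x} = 0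

/-- The trivial extension `S × Id`. -/
def prodId {X : Type*} [MeasurableSpace X] {μ : Measure X} [SFinite μ] (S : Aut X μ) :
    Aut (X × X) (μ.prod μ) :=
  ⟨S.toEquiv.prodCongr (MeasurableEquiv.refl X), S.mp.prod (MeasurePreserving.id μ)⟩

/-- Membership in `𝒥`: automorphisms of the product leaving every `A × X` invariant. -/
def MemJ {X : Type*} [MeasurableSpace X] {μ : Measure X}
    (J : Aut (X × X) (μ.prod μ)) : Prop :=
  ∀ A : Set X, MeasurableSet A → J.toEquiv '' (A ×ˢ (univ : Set X)) = A ×ˢ (univ : Set X)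

open scoped ENNReal

/-! ### Auxiliary lemmas on iterates of automorphisms -/

section Iter

variable {X : Type*} [MeasurableSpace X] {μ : Measure X}

lemma Aut.iter_left (S : Aut X μ) (n : ℕ) :
    Function.LeftInverse (S.toEquiv.symm^[n]) (S.toEquiv^[n]) :=
  Function.LeftInverse.iterate S.toEquiv.symm_apply_apply n

lemma Aut.iter_right (S : Aut X μ) (n : ℕ) :
    Function.RightInverse (S.toEquiv.symm^[n]) (S.toEquiv^[n]) :=
  Function.LeftInverse.iterate S.toEquiv.apply_symm_apply n

lemma Aut.mp_iter (S : Aut X μ) (n : ℕ) : MeasurePreserving (S.toEquiv^[n]) μ μ :=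
  S.mp.iterate n

lemma Aut.mp_iter_symm (S : Aut X μ) (n : ℕ) : MeasurePreserving (S.toEquiv.symm^[n]) μ μ :=
  (S.mp.symm S.toEquiv).iterate n

lemma Aut.image_iter (S : Aut X μ) (n : ℕ) (A : Set X) :
    S.toEquiv^[n] '' A = (S.toEquiv.symm^[n]) ⁻¹' A :=
  congrFun (Set.image_eq_preimage_of_inverse (S.iter_left n) (S.iter_right n)) A

lemma Aut.image_iter_symm (S : Aut X μ) (n : ℕ) (A : Set X) :
    S.toEquiv.symm^[n] '' A = (S.toEquiv^[n]) ⁻¹' A :=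
  congrFun (Set.image_eq_preimage_of_inverse (S.iter_right n) (S.iter_left n)) A

lemma Aut.measurableSet_image_iter (S : Aut X μ) (n : ℕ) {A : Set X} (hA : MeasurableSet A) :
    MeasurableSet (S.toEquiv^[n] '' A) := by
  rw [S.image_iter]; exact (S.mp_iter_symm n).measurable hA

lemma Aut.measurableSet_image_iter_symm (S : Aut X μ) (n : ℕ) {A : Set X} (hA : MeasurableSet A) :
    MeasurableSet (S.toEquiv.symm^[n] '' A) := by
  rw [S.image_iter_symm]; exact (S.mp_iter n).measurable hA

lemma Aut.measure_image_iter (S : Aut X μ) (n : ℕ) {A : Set X} (hA : MeasurableSet A) :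
    μ (S.toEquiv^[n] '' A) = μ A := by
  rw [S.image_iter]; exact (S.mp_iter_symm n).measure_preimage hA.nullMeasurableSet

lemma Aut.measure_image_iter_symm (S : Aut X μ) (n : ℕ) {A : Set X} (hA : MeasurableSet A) :
    μ (S.toEquiv.symm^[n] '' A) = μ A := by
  rw [S.image_iter_symm]; exact (S.mp_iter n).measure_preimage hA.nullMeasurableSet

/-- The full (two-sided) orbit of a set. -/
def sweep (S : Aut X μ) (B : Set X) : Set X :=
  (⋃ n : ℕ, S.toEquiv^[n] '' B) ∪ ⋃ n : ℕ, S.toEquiv.symm^[n] '' B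

lemma subset_sweep (S : Aut X μ) (B : Set X) : B ⊆ sweep S B := by
  intro x hx
  exact Or.inl (mem_iUnion.2 ⟨0, by simpa using hx⟩)

lemma sweep_mono (S : Aut X μ) {A B : Set X} (h : A ⊆ B) : sweep S A ⊆ sweep S B := by
  apply union_subset_union <;> exact iUnion_mono fun n => image_mono h

lemma measurableSet_sweep (S : Aut X μ) {B : Set X} (hB : MeasurableSet B) :
    MeasurableSet (sweep S B) :=
  ((MeasurableSet.iUnion fun n => S.measurableSet_image_iter n hB).union
    (MeasurableSet.iUnion fun n => S.measurableSet_image_iter_symm n hB))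

lemma sweep_symm_mem (S : Aut X μ) {B : Set X} {x : X} (h : x ∈ sweep S B) :
    S.toEquiv.symm x ∈ sweep S B := by
  rcases h with h | h
  · rcases mem_iUnion.1 h with ⟨n, b, hb, rfl⟩
    cases n with
    | zero => exact Or.inr (mem_iUnion.2 ⟨1, b, hb, by simp⟩)
    | succ m =>
      refine Or.inl (mem_iUnion.2 ⟨m, b, hb, ?_⟩)
      have : S.toEquiv^[m+1] b = S.toEquiv (S.toEquiv^[m] b) := Function.iterate_succ_apply' _ _ _
      rw [this, MeasurableEquiv.symm_apply_apply]
  · rcases mem_iUnion.1 h with ⟨n, b, hb, rfl⟩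
    exact Or.inr (mem_iUnion.2 ⟨n+1, b, hb, Function.iterate_succ_apply' _ _ _⟩)

lemma sweep_symm_iter_mem (S : Aut X μ) {B : Set X} {x : X} (h : x ∈ sweep S B) (k : ℕ) :
    S.toEquiv.symm^[k] x ∈ sweep S B := by
  induction k with
  | zero => simpa using h
  | succ m ih =>
    rw [Function.iterate_succ_apply']
    exact sweep_symm_mem S ih

lemma sweep_iter_mem_of_mem (S : Aut X μ) {B : Set X} {x : X} (hx : x ∈ B) (k : ℕ) :
    S.toEquiv^[k] x ∈ sweep S B :=
  Or.inl (mem_iUnion.2 ⟨k, x, hx, rfl⟩)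

/-- `E` together with its first `n-1` forward translates is disjoint. -/
def Good (S : Aut X μ) (n : ℕ) (E : Set X) : Prop :=
  MeasurableSet E ∧ ∀ x ∈ E, ∀ k, 0 < k → k < n → S.toEquiv^[k] x ∉ E

lemma good_empty (S : Aut X μ) (n : ℕ) : Good S n (∅ : Set X) :=
  ⟨MeasurableSet.empty, by simp⟩

lemma Good.measure_le {S : Aut X μ} {n : ℕ} {E : Set X} [IsProbabilityMeasure μ]
    (hE : Good S n E) : (n : ℝ≥0∞) * μ E ≤ 1 := by
  have hdisj : (Finset.range n : Set ℕ).PairwiseDisjoint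
      (fun k => S.toEquiv^[k] '' E) := by
    intro i hi j hj hij
    wlog hlt : i < j generalizing i j
    · exact (this hj hi hij.symm ((hij.lt_or_gt).resolve_left hlt)).symm
    refine Set.disjoint_left.2 ?_
    rintro z ⟨x, hx, rfl⟩ ⟨y, hy, hxy⟩
    -- `S^[j] y = S^[i] x`, so `S^[j-i] y = x ∈ E`
    have hj' : j = i + (j - i) := by omega
    have : S.toEquiv^[i] (S.toEquiv^[j-i] y) = S.toEquiv^[i] x := by
      rw [← Function.iterate_add_apply, ← hj', hxy]
    have hkey : S.toEquiv^[j-i] y = x :=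
      (S.toEquiv.injective.iterate i) this
    have := hE.2 y hy (j - i) (by omega) (by
      simp only [Finset.mem_coe, Finset.mem_range] at hj; omega)
    rw [hkey] at this
    exact this hx
  have hsum : ∑ k ∈ Finset.range n, μ (S.toEquiv^[k] '' E)
      = μ (⋃ k ∈ Finset.range n, S.toEquiv^[k] '' E) :=
    (measure_biUnion_finset hdisj (fun k _ => S.measurableSet_image_iter k hE.1)).symm
  have heach : ∀ k ∈ Finset.range n, μ (S.toEquiv^[k] '' E) = μ E :=
    fun k _ => S.measure_image_iter k hE.1
  calc (n : ℝ≥0∞) * μ E = ∑ k ∈ Finset.range n, μ (S.toEquiv^[k] '' E) := by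
        rw [Finset.sum_congr rfl heach, Finset.sum_const, Finset.card_range, nsmul_eq_mul]
      _ = μ (⋃ k ∈ Finset.range n, S.toEquiv^[k] '' E) := hsum
      _ ≤ 1 := prob_le_one

end Iter

/-! ### A positive measure set contains a positive measure set with disjoint translates -/

section GoodSubset

open scoped ENNReal
open MeasureTheory Set

variable {X : Type*} [MeasurableSpace X] {μ : Measure X}

lemma exists_good_subset (S : Aut X μ) (hS : Aperiodic S)
    (f : X → ℕ → Bool) (hf : Measurable f) (hinj : Function.Injective f)
    (n : ℕ) {W : Set X} (hW : MeasurableSet W) (hWpos : μ W ≠ 0) :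
    ∃ F, F ⊆ W ∧ Good S n F ∧ μ F ≠ 0 := by
  classical
  -- the set of points periodic with some period `≤ n` is null
  set P : Set X := ⋃ k : Fin n, {x | S.toEquiv^[(k : ℕ) + 1] x = x} with hP
  have hPnull : μ P = 0 := measure_iUnion_null fun k => hS ((k : ℕ) + 1) le_add_self
  -- basic separating pieces
  set G : ℕ → ℕ → ℕ × Bool → Set X := fun i j mb =>
    {x | f (S.toEquiv^[i] x) mb.1 = mb.2 ∧ f (S.toEquiv^[j] x) mb.1 = !mb.2} with hG
  have hGmeas : ∀ i j mb, MeasurableSet (G i j mb) := by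
    intro i j mb
    have h1 : Measurable fun x => f (S.toEquiv^[i] x) mb.1 :=
      (measurable_pi_apply mb.1).comp (hf.comp (S.mp_iter i).measurable)
    have h2 : Measurable fun x => f (S.toEquiv^[j] x) mb.1 :=
      (measurable_pi_apply mb.1).comp (hf.comp (S.mp_iter j).measurable)
    exact (h1 (measurableSet_singleton mb.2)).inter (h2 (measurableSet_singleton (!mb.2)))
  -- pieces indexed by choice functions
  set F : ((Fin n × Fin n) → ℕ × Bool) → Set X := fun c =>
    W ∩ ⋂ p : Fin n × Fin n,
      (if ((p.1 : ℕ) < (p.2 : ℕ)) then G p.1 p.2 (c p) else univ) with hF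
  have hFmeas : ∀ c, MeasurableSet (F c) := by
    intro c
    refine hW.inter (MeasurableSet.iInter fun p => ?_)
    split
    · exact hGmeas _ _ _
    · exact MeasurableSet.univ
  -- the pieces cover `W \ P`
  have hcover : W \ P ⊆ ⋃ c, F c := by
    intro x hx
    have hsep : ∀ p : Fin n × Fin n, (p.1 : ℕ) < (p.2 : ℕ) →
        ∃ mb : ℕ × Bool, x ∈ G p.1 p.2 mb := by
      intro p hp
      have hne : S.toEquiv^[(p.1 : ℕ)] x ≠ S.toEquiv^[(p.2 : ℕ)] x := by
        intro heq
        have hd : (p.2 : ℕ) = (p.1 : ℕ) + ((p.2 : ℕ) - (p.1 : ℕ)) := by omega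
        have : S.toEquiv^[(p.1 : ℕ)] (S.toEquiv^[(p.2 : ℕ) - (p.1 : ℕ)] x)
            = S.toEquiv^[(p.1 : ℕ)] x := by
          rw [← Function.iterate_add_apply, ← hd, heq]
        have hper : S.toEquiv^[(p.2 : ℕ) - (p.1 : ℕ)] x = x :=
          S.toEquiv.injective.iterate (p.1 : ℕ) this
        have hxP : x ∈ P := by
          refine mem_iUnion.2 ⟨⟨(p.2 : ℕ) - (p.1 : ℕ) - 1, by omega⟩, ?_⟩
          simpa only [mem_setOf_eq, Nat.sub_add_cancel (by omega : 1 ≤ (p.2 : ℕ) - (p.1 : ℕ))]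
            using hper
        exact hx.2 hxP
      have hfne : f (S.toEquiv^[(p.1 : ℕ)] x) ≠ f (S.toEquiv^[(p.2 : ℕ)] x) :=
        fun h => hne (hinj h)
      obtain ⟨m, hm⟩ := Function.ne_iff.1 hfne
      refine ⟨(m, f (S.toEquiv^[(p.1 : ℕ)] x) m), rfl, ?_⟩
      simp only
      cases hb1 : f (S.toEquiv^[(p.1 : ℕ)] x) m <;> cases hb2 : f (S.toEquiv^[(p.2 : ℕ)] x) m <;>
        simp_all
    refine mem_iUnion.2 ⟨fun p => if h : ((p.1 : ℕ) < (p.2 : ℕ)) then (hsep p h).choose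
      else (0, true), hx.1, ?_⟩
    refine mem_iInter.2 fun p => ?_
    by_cases h : ((p.1 : ℕ) < (p.2 : ℕ))
    · rw [if_pos h]
      simp only [dif_pos h]
      exact (hsep p h).choose_spec
    · rw [if_neg h]
      exact mem_univ x
  -- pick a piece of positive measure
  have : ∃ c, μ (F c) ≠ 0 := by
    by_contra h
    push_neg at h
    have h1 : μ (⋃ c, F c) = 0 := measure_iUnion_null h
    have h2 : μ (W \ P) = 0 := measure_mono_null hcover h1
    have h3 : μ W ≤ μ (W \ P) + μ P := by
      refine (measure_mono ?_).trans (measure_union_le _ _)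
      intro x hx
      by_cases hxP : x ∈ P
      · exact Or.inr hxP
      · exact Or.inl ⟨hx, hxP⟩
    rw [h2, hPnull, add_zero] at h3
    exact hWpos (le_antisymm h3 zero_le)
  obtain ⟨c, hc⟩ := this
  refine ⟨F c, inter_subset_left, ⟨hFmeas c, ?_⟩, hc⟩
  -- the disjointness property
  intro x hx k hk0 hkn hk
  have hn0 : 0 < n := lt_trans hk0 hkn |>.trans_le le_rfl |> fun h => lt_of_le_of_lt (Nat.zero_le _) hkn
  set p : Fin n × Fin n := (⟨0, hn0⟩, ⟨k, hkn⟩) with hp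
  have h1 : x ∈ G 0 k (c p) := by
    have := (mem_iInter.1 hx.2) p
    rwa [if_pos (by rw [hp]; exact hk0)] at this
  have h2 : S.toEquiv^[k] x ∈ G 0 k (c p) := by
    have := (mem_iInter.1 hk.2) p
    rwa [if_pos (by rw [hp]; exact hk0)] at this
  have e1 : f (S.toEquiv^[k] x) (c p).1 = !(c p).2 := h1.2
  have e2 : f (S.toEquiv^[0] (S.toEquiv^[k] x)) (c p).1 = (c p).2 := h2.1
  simp only [Function.iterate_zero, id_eq] at e2
  rw [e2] at e1
  exact (Bool.eq_not_self _).1 e1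

end GoodSubset

/-! ### Existence of a small sweep-out set -/

section Sweepout

open scoped ENNReal
open MeasureTheory Set

variable {X : Type*} [MeasurableSpace X] {μ : Measure X}

lemma good_union {S : Aut X μ} {n : ℕ} {E F : Set X} (hE : Good S n E)
    (hF : Good S n F) (hFE : F ⊆ (sweep S E)ᶜ) : Good S n (E ∪ F) := by
  refine ⟨hE.1.union hF.1, ?_⟩
  rintro x (hx | hx) k hk0 hkn (h | h)
  · exact hE.2 x hx k hk0 hkn h
  · exact hFE h (sweep_iter_mem_of_mem S hx k)
  · -- x ∈ F but S^[k] x ∈ E forces x ∈ sweep S E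
    have h1 : S.toEquiv.symm^[k] (S.toEquiv^[k] x) ∈ sweep S E :=
      sweep_symm_iter_mem S (subset_sweep S E h) k
    rw [S.iter_left k] at h1
    exact hFE hx h1
  · exact hF.2 x hx k hk0 hkn h

/-- One step of the exhaustion: a good set in the unswept region of `E` whose
measure is at least half the supremum of possible measures. -/
noncomputable def pick (S : Aut X μ) (n : ℕ) (E : Set X) : Set X := by
  classical
  exact if h : ∃ F, (F ⊆ (sweep S E)ᶜ ∧ Good S n F) ∧
      sSup ((fun F => μ F) '' {F | F ⊆ (sweep S E)ᶜ ∧ Good S n F}) / 2 < μ F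
    then h.choose else ∅

lemma pick_spec (S : Aut X μ) (n : ℕ) (E : Set X) :
    pick S n E ⊆ (sweep S E)ᶜ ∧ Good S n (pick S n E) := by
  classical
  unfold pick
  split
  · next h => exact h.choose_spec.1
  · exact ⟨empty_subset _, good_empty S n⟩

lemma pick_bound [IsProbabilityMeasure μ] (S : Aut X μ) (n : ℕ) (E : Set X)
    {F : Set X} (hFs : F ⊆ (sweep S E)ᶜ) (hFg : Good S n F) :
    μ F ≤ 2 * μ (pick S n E) := by
  classical
  set c := sSup ((fun F => μ F) '' {F | F ⊆ (sweep S E)ᶜ ∧ Good S n F}) with hc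
  have hFc : μ F ≤ c := le_sSup ⟨F, ⟨hFs, hFg⟩, rfl⟩
  have hc1 : c ≤ 1 := by
    refine sSup_le ?_
    rintro - ⟨F', -, rfl⟩
    exact prob_le_one
  unfold pick
  split
  · next h =>
    have h2 : c / 2 < μ h.choose := h.choose_spec.2
    calc μ F ≤ c := hFc
      _ = 2 * (c / 2) := (ENNReal.mul_div_cancel' (by norm_num) (by norm_num)).symm
      _ ≤ 2 * μ h.choose := mul_le_mul_right h2.le 2
  · next h =>
    push_neg at h
    have hF0 : μ F = 0 := by
      by_contra hF0
      have hcpos : c ≠ 0 := fun h0 => hF0 (le_antisymm (h0 ▸ hFc) zero_le)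
      have hctop : c ≠ ⊤ := (hc1.trans_lt (by norm_num)).ne
      have hhalf : c / 2 < c := ENNReal.half_lt_self hcpos hctop
      obtain ⟨y, ⟨F', hF', rfl⟩, hy⟩ := lt_sSup_iff.1 hhalf
      exact absurd (h F' ⟨hF'.1, hF'.2⟩) (not_le.2 hy)
    rw [hF0]
    exact zero_le

/-- The exhaustion sequence. -/
noncomputable def seqE (S : Aut X μ) (n : ℕ) : ℕ → Set X
  | 0 => ∅
  | k + 1 => seqE S n k ∪ pick S n (seqE S n k)

lemma seqE_good (S : Aut X μ) (n : ℕ) (k : ℕ) : Good S n (seqE S n k) := by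
  induction k with
  | zero => exact good_empty S n
  | succ m ih => exact good_union ih (pick_spec S n _).2 (pick_spec S n _).1

lemma seqE_mono (S : Aut X μ) (n : ℕ) : Monotone (seqE S n) :=
  monotone_nat_of_le_succ fun k => subset_union_left

lemma exists_small_sweepout [IsProbabilityMeasure μ] (S : Aut X μ) (hS : Aperiodic S)
    (f : X → ℕ → Bool) (hf : Measurable f) (hinj : Function.Injective f) (n : ℕ) :
    ∃ B : Set X, MeasurableSet B ∧ (n : ℝ≥0∞) * μ B ≤ 1 ∧ μ (sweep S B)ᶜ = 0 := by
  classical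
  set B : Set X := ⋃ k, seqE S n k with hB
  have hBgood : Good S n B := by
    refine ⟨MeasurableSet.iUnion fun k => (seqE_good S n k).1, ?_⟩
    intro x hx k hk0 hkn h
    obtain ⟨i, hi⟩ := mem_iUnion.1 hx
    obtain ⟨j, hj⟩ := mem_iUnion.1 h
    have hij1 : x ∈ seqE S n (max i j) := seqE_mono S n (le_max_left i j) hi
    have hij2 : S.toEquiv^[k] x ∈ seqE S n (max i j) := seqE_mono S n (le_max_right i j) hj
    exact (seqE_good S n (max i j)).2 x hij1 k hk0 hkn hij2
  refine ⟨B, hBgood.1, hBgood.measure_le, ?_⟩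
  by_contra hpos
  have hWmeas : MeasurableSet (sweep S B)ᶜ := (measurableSet_sweep S hBgood.1).compl
  obtain ⟨F, hFW, hFgood, hF0⟩ := exists_good_subset S hS f hf hinj n hWmeas hpos
  set c := μ F / 2 with hcdef
  have hc0 : c ≠ 0 := by
    rw [hcdef, ne_eq, ENNReal.div_eq_zero_iff]
    push_neg
    exact ⟨hF0, by norm_num⟩
  have hctop : c ≠ ⊤ := by
    refine (lt_of_le_of_lt (ENNReal.div_le_of_le_mul ?_) (by norm_num : (1 : ℝ≥0∞) < ⊤)).ne
    calc μ F ≤ 1 := prob_le_one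
      _ ≤ 1 * 2 := by norm_num
  -- each pick has measure at least `c`
  have hpickc : ∀ k, c ≤ μ (pick S n (seqE S n k)) := by
    intro k
    have hsub : F ⊆ (sweep S (seqE S n k))ᶜ := by
      refine hFW.trans (compl_subset_compl.2 (sweep_mono S ?_))
      exact subset_iUnion (seqE S n) k
    have := pick_bound S n (seqE S n k) hsub hFgood
    calc c = μ F / 2 := rfl
      _ ≤ 2 * μ (pick S n (seqE S n k)) / 2 := ENNReal.div_le_div_right this 2
      _ = μ (pick S n (seqE S n k)) := by
          rw [mul_comm, mul_div_assoc, ENNReal.div_self (by norm_num) (by norm_num), mul_one]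
  -- hence the measures grow linearly
  have hgrow : ∀ k : ℕ, (k : ℝ≥0∞) * c ≤ μ (seqE S n k) := by
    intro k
    induction k with
    | zero => simp
    | succ m ih =>
      have hdisj : Disjoint (seqE S n m) (pick S n (seqE S n m)) := by
        refine Set.disjoint_left.2 fun x hx hx' => ?_
        exact (pick_spec S n (seqE S n m)).1 hx' (subset_sweep S _ hx)
      have hmeas : MeasurableSet (pick S n (seqE S n m)) := (pick_spec S n _).2.1
      have : μ (seqE S n (m + 1)) = μ (seqE S n m) + μ (pick S n (seqE S n m)) :=
        measure_union hdisj hmeas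
      rw [this]
      push_cast
      rw [add_mul, one_mul]
      exact add_le_add ih (hpickc m)
  -- contradiction with the measure being at most 1
  obtain ⟨k, hk⟩ := ENNReal.exists_nat_gt
    (ENNReal.mul_ne_top (a := 2) (b := c⁻¹) (by norm_num) (ENNReal.inv_ne_top.2 hc0))
  have h2 : (2 : ℝ≥0∞) ≤ (k : ℝ≥0∞) * c := by
    calc (2 : ℝ≥0∞) = 2 * c⁻¹ * c := by
          rw [mul_assoc, ENNReal.inv_mul_cancel hc0 hctop, mul_one]
      _ ≤ (k : ℝ≥0∞) * c := mul_le_mul_left hk.le c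
  have h3 : (2 : ℝ≥0∞) ≤ 1 := h2.trans ((hgrow k).trans prob_le_one)
  norm_num at h3

end Sweepout

/-! ### The conjugating maps on the product space -/

section ProdMach

open scoped ENNReal
open MeasureTheory Set

variable {X : Type*} [MeasurableSpace X] {μ : Measure X}

/-- Powers of an automorphism. -/
noncomputable def autPow {Y : Type*} [MeasurableSpace Y] {ν : Measure Y} (a : Aut Y ν) :
    ℕ → Aut Y ν
  | 0 => Aut.id ν
  | k + 1 => a.comp (autPow a k)

lemma autPow_comm {Y : Type*} [MeasurableSpace Y] {ν : Measure Y} (a : Aut Y ν) (k : ℕ)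
    (p : Y) : (autPow a k).toEquiv (a.toEquiv p) = a.toEquiv ((autPow a k).toEquiv p) := by
  induction k with
  | zero => rfl
  | succ m ih =>
    show a.toEquiv ((autPow a m).toEquiv (a.toEquiv p))
      = a.toEquiv (a.toEquiv ((autPow a m).toEquiv p))
    rw [ih]

variable [SFinite μ]

lemma prodId_apply (S : Aut X μ) (p : X × X) :
    (prodId S).toEquiv p = (S.toEquiv p.1, p.2) := rfl

lemma prodId_inv_apply (S : Aut X μ) (p : X × X) :
    (prodId S).inv.toEquiv p = (S.toEquiv.symm p.1, p.2) := by
  show (prodId S).toEquiv.symm p = (S.toEquiv.symm p.1, p.2)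
  apply (prodId S).toEquiv.injective
  rw [MeasurableEquiv.apply_symm_apply, prodId_apply]
  simp

lemma qpow_apply (S : Aut X μ) (k : ℕ) (p : X × X) :
    (autPow ((prodId S).inv) k).toEquiv p = (S.toEquiv.symm^[k] p.1, p.2) := by
  induction k generalizing p with
  | zero => rfl
  | succ m ih =>
    show (prodId S).inv.toEquiv ((autPow ((prodId S).inv) m).toEquiv p) = _
    rw [ih, prodId_inv_apply]
    simp [Function.iterate_succ_apply']

lemma rpow_fst (S : Aut X μ) (E : SkewExt S) (k : ℕ) (p : X × X) :
    ((autPow E.prod k).toEquiv p).1 = S.toEquiv^[k] p.1 := by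
  induction k generalizing p with
  | zero => rfl
  | succ m ih =>
    show (E.prod.toEquiv ((autPow E.prod m).toEquiv p)).1 = _
    rw [E.spec, ih]
    exact (Function.iterate_succ_apply' _ _ _).symm

/-- The conjugating automorphisms: `Mup k = R^k ∘ (S⁻¹ × Id)^k`; it fixes the first
coordinate and acts on fibers by the `k`-step cocycle at the `k`-th preimage. -/
noncomputable def Mup (S : Aut X μ) (E : SkewExt S) (k : ℕ) : Aut (X × X) (μ.prod μ) :=
  (autPow E.prod k).comp (autPow ((prodId S).inv) k)

lemma Mup_fst (S : Aut X μ) (E : SkewExt S) (k : ℕ) (p : X × X) :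
    ((Mup S E k).toEquiv p).1 = p.1 := by
  show ((autPow E.prod k).toEquiv ((autPow ((prodId S).inv) k).toEquiv p)).1 = p.1
  rw [rpow_fst, qpow_apply]
  exact S.iter_right k p.1

lemma Mup_symm_fst (S : Aut X μ) (E : SkewExt S) (k : ℕ) (p : X × X) :
    ((Mup S E k).toEquiv.symm p).1 = p.1 := by
  conv_rhs => rw [← (Mup S E k).toEquiv.apply_symm_apply p]
  rw [Mup_fst]

lemma Mup_key (S : Aut X μ) (E : SkewExt S) (k : ℕ) (z : X × X) :
    (Mup S E (k+1)).toEquiv ((prodId S).toEquiv ((Mup S E k).toEquiv.symm z))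
      = E.prod.toEquiv z := by
  set w := (Mup S E k).toEquiv.symm z with hw
  have h1 : (autPow ((prodId S).inv) (k+1)).toEquiv ((prodId S).toEquiv w)
      = (autPow ((prodId S).inv) k).toEquiv w := by
    show (prodId S).inv.toEquiv
        ((autPow ((prodId S).inv) k).toEquiv ((prodId S).toEquiv w)) = _
    rw [← autPow_comm]
    congr 1
    show (prodId S).toEquiv.symm ((prodId S).toEquiv w) = w
    rw [MeasurableEquiv.symm_apply_apply]
  show (autPow E.prod (k+1)).toEquiv
      ((autPow ((prodId S).inv) (k+1)).toEquiv ((prodId S).toEquiv w)) = E.prod.toEquiv z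
  rw [h1]
  show E.prod.toEquiv
      ((autPow E.prod k).toEquiv ((autPow ((prodId S).inv) k).toEquiv w)) = E.prod.toEquiv z
  congr 1
  show (Mup S E k).toEquiv w = z
  rw [hw, MeasurableEquiv.apply_symm_apply]

end ProdMach

/-! ### The height function -/

section Height

open scoped ENNReal
open MeasureTheory Set

variable {X : Type*} [MeasurableSpace X] {μ : Measure X}

open Classical in
/-- Number of steps backwards to reach `B` (junk value `0` if never). -/
noncomputable def htB (S : Aut X μ) (B : Set X) (x : X) : ℕ :=
  if h : ∃ k : ℕ, S.toEquiv.symm^[k] x ∈ B then Nat.find h else 0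

lemma measurable_htB (S : Aut X μ) {B : Set X} (hB : MeasurableSet B) :
    Measurable (htB S B) := by
  classical
  refine measurable_to_countable' fun m => ?_
  cases m with
  | zero =>
    have hdesc : htB S B ⁻¹' {0} = B ∪ ⋂ k : ℕ, (fun x => S.toEquiv.symm^[k] x) ⁻¹' Bᶜ := by
      ext x
      simp only [mem_preimage, mem_singleton_iff, mem_union, mem_iInter, mem_compl_iff]
      by_cases h : ∃ k : ℕ, S.toEquiv.symm^[k] x ∈ B
      · rw [htB, dif_pos h, Nat.find_eq_zero h]
        constructor
        · intro h0; exact Or.inl (by simpa using h0)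
        · rintro (h0 | h0)
          · simpa using h0
          · exact absurd (Nat.find_spec h) (h0 _)
      · push_neg at h
        rw [htB, dif_neg (by push_neg; exact h)]
        simp only [true_iff]
        exact Or.inr h
    rw [hdesc]
    exact hB.union (MeasurableSet.iInter fun k => (S.mp_iter_symm k).measurable hB.compl)
  | succ m =>
    have hdesc : htB S B ⁻¹' {m + 1} =
        ((fun x => S.toEquiv.symm^[m + 1] x) ⁻¹' B) ∩
          ⋂ j : Fin (m + 1), (fun x => S.toEquiv.symm^[(j : ℕ)] x) ⁻¹' Bᶜ := by
      ext x
      simp only [mem_preimage, mem_singleton_iff, mem_inter_iff, mem_iInter, mem_compl_iff]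
      by_cases h : ∃ k : ℕ, S.toEquiv.symm^[k] x ∈ B
      · rw [htB, dif_pos h, Nat.find_eq_iff h]
        constructor
        · rintro ⟨h1, h2⟩
          exact ⟨h1, fun j => h2 (j : ℕ) j.2⟩
        · rintro ⟨h1, h2⟩
          exact ⟨h1, fun j hj => h2 ⟨j, hj⟩⟩
      · push_neg at h
        rw [htB, dif_neg (by push_neg; exact h)]
        constructor
        · intro h0; exact absurd h0 (by omega)
        · rintro ⟨h1, -⟩; exact absurd h1 (h _)
    rw [hdesc]
    exact ((S.mp_iter_symm (m + 1)).measurable hB).inter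
      (MeasurableSet.iInter fun j => (S.mp_iter_symm _).measurable hB.compl)

end Height

set_option maxHeartbeats 2000000 in
/-- For an aperiodic `S`, the cohomology class of the trivial extension `S × Id`
is dense in `Ext(S)`: for every skew product `R` over `S` and `δ > 0` there is
`J ∈ 𝒥` with `μ⊗μ {z : J⁻¹(S × Id)J z ≠ R z} < δ`. -/
theorem cohomology_class_of_trivial_dense {X : Type*} [MeasurableSpace X] [StandardBorelSpace X]
    (μ : Measure X) [IsProbabilityMeasure μ] (S : Aut X μ)
    (hS : Aperiodic S) :
    ∀ E : SkewExt S, ∀ δ > (0 : ℝ), ∃ J : Aut (X × X) (μ.prod μ), MemJ J ∧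
      (μ.prod μ) {z : X × X |
        J.toEquiv.symm ((prodId S).toEquiv (J.toEquiv z)) ≠ E.prod.toEquiv z}
        < ENNReal.ofReal δ := by
  classical
  obtain ⟨f, hf, hinj⟩ := MeasurableSpace.measurable_injection_nat_bool_of_countablySeparated X
  intro E δ hδ
  obtain ⟨n, hn⟩ := exists_nat_gt (1 / δ)
  have hnR : (0 : ℝ) < n := lt_trans (by positivity) hn
  obtain ⟨B, hBmeas, hBbound, hBnull⟩ := exists_small_sweepout S hS f hf hinj n
  -- the set of points which never visited `B` in the past
  set D : Set X := ⋂ k : ℕ, (fun x => S.toEquiv.symm^[k] x) ⁻¹' Bᶜ with hD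
  have hDmeas : MeasurableSet D :=
    MeasurableSet.iInter fun k => (S.mp_iter_symm k).measurable hBmeas.compl
  have hDdef : ∀ x, x ∈ D ↔ ∀ k : ℕ, S.toEquiv.symm^[k] x ∉ B := by
    intro x
    simp only [hD, mem_iInter, mem_preimage, mem_compl_iff]
  -- `D` is null
  have hDnull : μ D = 0 := by
    have hfwd : ∀ k : ℕ, D ∩ (S.toEquiv^[k] '' B) = ∅ := by
      intro k
      ext x
      simp only [mem_inter_iff, mem_empty_iff_false, iff_false, not_and]
      rintro hxD ⟨b, hb, rfl⟩
      exact ((hDdef _).1 hxD k) (by rw [S.iter_left k]; exact hb)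
    have hDsub : ∀ k : ℕ, S.toEquiv.symm^[k] '' D ⊆ D := by
      rintro k x ⟨d, hd, rfl⟩
      refine (hDdef _).2 fun j => ?_
      rw [← Function.iterate_add_apply]
      exact (hDdef _).1 hd (j + k)
    have hbwdnull : ∀ k : ℕ, μ (D ∩ (S.toEquiv.symm^[k] '' B)) = 0 := by
      intro k
      have h1 : μ (D \ (S.toEquiv.symm^[k] '' D)) = 0 := by
        rw [measure_diff (hDsub k)
            (S.measurableSet_image_iter_symm k hDmeas).nullMeasurableSet
            (measure_ne_top μ _),
          S.measure_image_iter_symm k hDmeas, tsub_self]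
      refine measure_mono_null ?_ h1
      rintro x ⟨hxD, b, hb, rfl⟩
      refine ⟨hxD, ?_⟩
      rintro ⟨d, hd, hdb⟩
      have hdbeq : d = b := (S.toEquiv.symm.injective.iterate k) hdb
      subst hdbeq
      exact (by simpa using (hDdef _).1 hd 0 : d ∉ B) hb
    have hsweep : μ (D ∩ sweep S B) = 0 := by
      have hsub : D ∩ sweep S B ⊆
          (⋃ k, D ∩ (S.toEquiv^[k] '' B)) ∪ ⋃ k, D ∩ (S.toEquiv.symm^[k] '' B) := by
        rintro x ⟨hxD, hs | hs⟩
        · rcases mem_iUnion.1 hs with ⟨k, hk⟩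
          exact Or.inl (mem_iUnion.2 ⟨k, hxD, hk⟩)
        · rcases mem_iUnion.1 hs with ⟨k, hk⟩
          exact Or.inr (mem_iUnion.2 ⟨k, hxD, hk⟩)
      refine measure_mono_null hsub (measure_union_null ?_ (measure_iUnion_null hbwdnull))
      exact measure_iUnion_null fun k => by rw [hfwd k]; exact measure_empty
    have hout : μ (D \ sweep S B) = 0 :=
      measure_mono_null (fun x hx => hx.2) hBnull
    have : μ D ≤ μ (D ∩ sweep S B) + μ (D \ sweep S B) := by
      refine (measure_mono ?_).trans (measure_union_le _ _)
      intro x hx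
      by_cases h : x ∈ sweep S B
      exacts [Or.inl ⟨hx, h⟩, Or.inr ⟨hx, h⟩]
    rw [hsweep, hout, add_zero] at this
    exact le_antisymm this zero_le
  -- the height function and the conjugation
  set ht : X → ℕ := htB S B with hht
  have hhtm : Measurable ht := measurable_htB S hBmeas
  set Jf : X × X → X × X := fun p => (Mup S E (ht p.1)).toEquiv.symm p with hJf
  set Jg : X × X → X × X := fun p => (Mup S E (ht p.1)).toEquiv p with hJg
  have hJf_fst : ∀ p, (Jf p).1 = p.1 := fun p => Mup_symm_fst S E _ p
  have hJg_fst : ∀ p, (Jg p).1 = p.1 := fun p => Mup_fst S E _ p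
  have hleft : ∀ p, Jg (Jf p) = p := by
    intro p
    show (Mup S E (ht (Jf p).1)).toEquiv (Jf p) = p
    rw [hJf_fst p]
    exact (Mup S E (ht p.1)).toEquiv.apply_symm_apply p
  have hright : ∀ p, Jf (Jg p) = p := by
    intro p
    show (Mup S E (ht (Jg p).1)).toEquiv.symm (Jg p) = p
    rw [hJg_fst p]
    exact (Mup S E (ht p.1)).toEquiv.symm_apply_apply p
  have hJfm : Measurable Jf := by
    have h1 : Measurable fun q : (X × X) × ℕ => (Mup S E q.2).toEquiv.symm q.1 :=
      measurable_from_prod_countable_left fun m => (Mup S E m).toEquiv.symm.measurable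
    exact h1.comp (measurable_id.prodMk (hhtm.comp measurable_fst))
  have hJgm : Measurable Jg := by
    have h1 : Measurable fun q : (X × X) × ℕ => (Mup S E q.2).toEquiv q.1 :=
      measurable_from_prod_countable_left fun m => (Mup S E m).toEquiv.measurable
    exact h1.comp (measurable_id.prodMk (hhtm.comp measurable_fst))
  set Jeq : (X × X) ≃ᵐ (X × X) :=
    { toEquiv := ⟨Jf, Jg, hleft, hright⟩
      measurable_toFun := hJfm
      measurable_invFun := hJgm } with hJeq
  -- level sets
  set L : ℕ → Set (X × X) := fun m => (fun p : X × X => ht p.1) ⁻¹' {m} with hL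
  have hLmeas : ∀ m, MeasurableSet (L m) :=
    fun m => (hhtm.comp measurable_fst) (measurableSet_singleton m)
  -- measure preservation
  have hJmp : MeasurePreserving Jf (μ.prod μ) (μ.prod μ) := by
    refine ⟨hJfm, ?_⟩
    refine Measure.ext fun A hA => ?_
    rw [Measure.map_apply hJfm hA]
    have hpre : Jf ⁻¹' A = ⋃ m, (Mup S E m).toEquiv.symm ⁻¹' (A ∩ L m) := by
      ext p
      simp only [mem_preimage, mem_iUnion, mem_inter_iff]
      constructor
      · intro hp
        refine ⟨ht p.1, hp, ?_⟩
        show ht ((Mup S E (ht p.1)).toEquiv.symm p).1 ∈ ({ht p.1} : Set ℕ)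
        rw [Mup_symm_fst]
        exact rfl
      · rintro ⟨m, hm1, hm2⟩
        have hm3 : ht p.1 = m := by
          have := hm2
          simp only [hL, mem_preimage, mem_singleton_iff] at this
          rwa [Mup_symm_fst] at this
        show Jf p ∈ A
        rw [hJf]
        simp only
        rw [hm3]
        exact hm1
    rw [hpre]
    have hdisj2 : Pairwise (Function.onFun Disjoint
        fun m => (Mup S E m).toEquiv.symm ⁻¹' (A ∩ L m)) := by
      intro i j hij
      refine Set.disjoint_left.2 fun p hpi hpj => hij ?_
      simp only [mem_preimage, mem_inter_iff, hL, mem_singleton_iff] at hpi hpj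
      rw [Mup_symm_fst] at hpi hpj
      rw [← hpi.2, ← hpj.2]
    rw [measure_iUnion hdisj2
      (fun m => (Mup S E m).toEquiv.symm.measurable (hA.inter (hLmeas m)))]
    have heach : ∀ m, (μ.prod μ) ((Mup S E m).toEquiv.symm ⁻¹' (A ∩ L m))
        = (μ.prod μ) (A ∩ L m) := fun m =>
      ((Mup S E m).mp.symm (Mup S E m).toEquiv).measure_preimage
        (hA.inter (hLmeas m)).nullMeasurableSet
    rw [tsum_congr heach]
    have hdisj3 : Pairwise (Function.onFun Disjoint fun m => A ∩ L m) := by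
      intro i j hij
      refine Set.disjoint_left.2 fun p hpi hpj => hij ?_
      simp only [mem_inter_iff, hL, mem_preimage, mem_singleton_iff] at hpi hpj
      rw [← hpi.2, ← hpj.2]
    rw [← measure_iUnion hdisj3 (fun m => hA.inter (hLmeas m))]
    congr 1
    rw [← inter_iUnion]
    have : ⋃ m, L m = univ :=
      eq_univ_of_forall fun p => mem_iUnion.2 ⟨ht p.1, rfl⟩
    rw [this, inter_univ]
  refine ⟨⟨Jeq, hJmp⟩, ?_, ?_⟩
  · -- MemJ
    intro A hA
    apply subset_antisymm
    · rintro - ⟨p, hp, rfl⟩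
      show Jf p ∈ A ×ˢ univ
      exact ⟨by rw [hJf_fst]; exact hp.1, mem_univ _⟩
    · intro q hq
      exact ⟨Jg q, ⟨by rw [hJg_fst]; exact hq.1, mem_univ _⟩, hright q⟩
  · -- the estimate
    have hagree : ∀ z : X × X, z.1 ∉ D → S.toEquiv z.1 ∉ B →
        Jeq.symm ((prodId S).toEquiv (Jeq z)) = E.prod.toEquiv z := by
      intro z hzD hzB
      have hx : ∃ k : ℕ, S.toEquiv.symm^[k] z.1 ∈ B := by
        by_contra h
        push_neg at h
        exact hzD ((hDdef _).2 h)
      have hm : ht z.1 = Nat.find hx := dif_pos hx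
      have hSx : ∃ k : ℕ, S.toEquiv.symm^[k] (S.toEquiv z.1) ∈ B := by
        refine ⟨Nat.find hx + 1, ?_⟩
        rw [Function.iterate_succ_apply, MeasurableEquiv.symm_apply_apply]
        exact Nat.find_spec hx
      have hSxht : ht (S.toEquiv z.1) = ht z.1 + 1 := by
        have h0 : ht (S.toEquiv z.1) = Nat.find hSx := dif_pos hSx
        rw [h0, hm, Nat.find_eq_iff]
        constructor
        · rw [Function.iterate_succ_apply, MeasurableEquiv.symm_apply_apply]
          exact Nat.find_spec hx
        · intro j hj
          match j with
          | 0 => simpa using hzB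
          | i + 1 =>
            rw [Function.iterate_succ_apply, MeasurableEquiv.symm_apply_apply]
            exact Nat.find_min hx (by omega)
      show Jg ((prodId S).toEquiv (Jf z)) = E.prod.toEquiv z
      have h1 : ((prodId S).toEquiv (Jf z)).1 = S.toEquiv z.1 := by
        rw [prodId_apply]
        show S.toEquiv (Jf z).1 = S.toEquiv z.1
        rw [hJf_fst]
      show (Mup S E (ht ((prodId S).toEquiv (Jf z)).1)).toEquiv
        ((prodId S).toEquiv (Jf z)) = E.prod.toEquiv z
      rw [h1, hSxht]
      exact Mup_key S E (ht z.1) z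
    have hsub : {z : X × X | Jeq.symm ((prodId S).toEquiv (Jeq z)) ≠ E.prod.toEquiv z}
        ⊆ (D ∪ S.toEquiv ⁻¹' B) ×ˢ (univ : Set X) := by
      intro z hz
      simp only [mem_setOf_eq] at hz
      by_contra hzc
      simp only [mem_prod, mem_union, mem_preimage, mem_univ, and_true] at hzc
      push_neg at hzc
      exact hz (hagree z hzc.1 hzc.2)
    have herr : (μ.prod μ) {z : X × X |
        Jeq.symm ((prodId S).toEquiv (Jeq z)) ≠ E.prod.toEquiv z}
        ≤ μ (D ∪ S.toEquiv ⁻¹' B) := by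
      refine (measure_mono hsub).trans_eq ?_
      rw [Measure.prod_prod, measure_univ, mul_one]
    have h2 : μ (D ∪ S.toEquiv ⁻¹' B) ≤ ((n : ℕ) : ℝ≥0∞)⁻¹ := by
      refine (measure_union_le _ _).trans ?_
      rw [hDnull, zero_add, S.mp.measure_preimage hBmeas.nullMeasurableSet]
      rw [ENNReal.le_inv_iff_mul_le]
      rwa [mul_comm] at hBbound
    have h3 : ((n : ℕ) : ℝ≥0∞)⁻¹ < ENNReal.ofReal δ := by
      have hcast : ((n : ℕ) : ℝ≥0∞)⁻¹ = ENNReal.ofReal ((n : ℝ)⁻¹) := by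
        rw [ENNReal.ofReal_inv_of_pos hnR, ENNReal.ofReal_natCast]
      rw [hcast, ENNReal.ofReal_lt_ofReal_iff hδ]
      have h1n : (1 : ℝ) < n * δ := (div_lt_iff₀ hδ).1 hn
      have hinv : (n : ℝ)⁻¹ * (n : ℝ) = 1 := inv_mul_cancel₀ hnR.ne'
      nlinarith [inv_pos.2 hnR]
    exact lt_of_le_of_lt (herr.trans h2) h3
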